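/- For y ∈ (0,1/2), one has the power series expansions (1+y)^{2H} + (1-y)^{2H} - 2 = Σ_{k≥0} c_k y^{2k+2} and (1+2y)^{2H} + (1-2y)^{2H} - 2 = Σ_{k≥0} c_k (2y)^{2k+2}, where c_k = 2·(2H)(2H-1)⋯(2H-2k-1)/(2k+2)!, and the function η(H,y) = ((1+2y)^{2H} + (1-2y)^{2H} - 2)/((1+y)^{2H} + (1-y)^{2H} - 2) is strictly increasing in y on (0,1/2) for every H ∈ (1/2,1). -/

import Mathlib

open Finset Set

noncomputable def bin (a : ℝ) (n : ℕ) : ℝ := (∏ i ∈ Finset.range n, (a - i)) / (Nat.factorial n)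

lemma bin_zero (a : ℝ) : bin a 0 = 1 := by simp [bin]

lemma bin_succ (a : ℝ) (n : ℕ) : bin a (n+1) * (n+1) = bin a n * (a - n) := by
  have h1 : (Nat.factorial (n+1) : ℝ) = (n+1) * Nat.factorial n := by
    push_cast [Nat.factorial_succ]; ring
  have h2 : (Nat.factorial n : ℝ) ≠ 0 := Nat.cast_ne_zero.2 (Nat.factorial_ne_zero n)
  have h3 : ((n:ℝ)+1) ≠ 0 := by positivity
  simp only [bin, Finset.prod_range_succ, h1]
  field_simp

lemma abs_bin_le (a : ℝ) (ha1 : 1 < a) (ha2 : a < 2) : ∀ n, |bin a n| ≤ 2 := by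
  intro n
  induction n with
  | zero => simp [bin_zero]
  | succ n ih =>
    have hfac : ((n:ℝ)+1) ≠ 0 := by positivity
    have key : bin a (n+1) = bin a n * (a - n) / (n+1) := by
      field_simp; linarith [bin_succ a n]
    rw [key, abs_div, abs_mul, abs_of_pos (show (0:ℝ) < (n:ℝ)+1 by positivity)]
    rcases Nat.eq_zero_or_pos n with h0 | hpos
    · subst h0
      simp [bin_zero, abs_of_pos (by linarith : (0:ℝ) < a)]
      linarith
    · have hn1 : (1:ℝ) ≤ n := by exact_mod_cast hpos
      have habs : |a - n| ≤ (n:ℝ) + 1 := by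
        rw [abs_le]; constructor <;> nlinarith
      rw [div_le_iff₀ (by positivity)]
      exact mul_le_mul ih habs (abs_nonneg _) (by norm_num)

section series
variable {a : ℝ}

lemma summable_bin (ha1 : 1 < a) (ha2 : a < 2) {x : ℝ} (hx : |x| < 1) :
    Summable (fun n => bin a n * x ^ n) := by
  have hg : Summable (fun n : ℕ => 2 * |x| ^ n) :=
    (summable_geometric_of_lt_one (abs_nonneg x) hx).mul_left 2
  apply Summable.of_norm
  refine Summable.of_nonneg_of_le (fun n => norm_nonneg _) (fun n => ?_) hg
  rw [Real.norm_eq_abs, abs_mul, abs_pow]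
  exact mul_le_mul_of_nonneg_right (abs_bin_le a ha1 ha2 n) (by positivity)

lemma summable_deriv_bound {b : ℝ} (hb0 : 0 ≤ b) (hb : b < 1) :
    Summable (fun n : ℕ => 2 * ((n:ℝ) * b ^ (n-1))) := by
  rcases eq_or_lt_of_le hb0 with h | h
  · have hg : Summable (fun n : ℕ => if n = 1 then (2:ℝ) else 0) := by
      apply summable_of_finite_support
      apply Set.Finite.subset (Set.finite_singleton 1)
      intro n hn
      simp only [Function.mem_support] at hn
      simp only [Set.mem_singleton_iff]
      by_contra hne; exact hn (if_neg hne)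
    refine Summable.of_nonneg_of_le (fun n => by positivity) (fun n => ?_) hg
    match n with
    | 0 => simp
    | 1 => simp
    | (m+2) => simp [← h, pow_succ]
  · have hs : Summable (fun n : ℕ => (n:ℝ) ^ 1 * b ^ n) :=
      summable_pow_mul_geometric_of_norm_lt_one 1 (by rwa [Real.norm_eq_abs, abs_of_pos h])
    refine Summable.of_nonneg_of_le (fun n => by positivity) (fun n => ?_) (hs.mul_left (2/b))
    match n with
    | 0 => simp
    | (m+1) =>
      have h1 : (m+1) - 1 = m := rfl
      rw [h1]
      apply le_of_eq
      rw [pow_one, pow_succ]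
      field_simp

lemma summable_bin_deriv (ha1 : 1 < a) (ha2 : a < 2) {x b : ℝ} (hb : b < 1) (hx : |x| ≤ b) :
    Summable (fun n : ℕ => bin a n * ((n:ℝ) * x ^ (n-1))) := by
  have hb0 : 0 ≤ b := le_trans (abs_nonneg x) hx
  apply Summable.of_norm
  refine Summable.of_nonneg_of_le (fun n => norm_nonneg _) (fun n => ?_)
    (summable_deriv_bound hb0 hb)
  rw [Real.norm_eq_abs, abs_mul, abs_mul, abs_pow, Nat.abs_cast]
  exact mul_le_mul (abs_bin_le a ha1 ha2 n)
    (mul_le_mul_of_nonneg_left (pow_le_pow_left₀ (abs_nonneg x) hx _) (Nat.cast_nonneg n))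
    (by positivity) (by norm_num)

end series

noncomputable def Sf (a : ℝ) (x : ℝ) : ℝ := ∑' n : ℕ, bin a n * x ^ n

noncomputable def Df (a : ℝ) (x : ℝ) : ℝ := ∑' n : ℕ, bin a n * ((n:ℝ) * x ^ (n-1))

lemma hasDerivAt_Sf {a : ℝ} (ha1 : 1 < a) (ha2 : a < 2) {x : ℝ} (hx : |x| < 1) :
    HasDerivAt (Sf a) (Df a x) x := by
  set b := (|x| + 1) / 2 with hbdef
  have hxb : |x| < b := by rw [hbdef]; linarith
  have hb1 : b < 1 := by rw [hbdef]; linarith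
  have hb0 : 0 ≤ b := le_trans (abs_nonneg x) hxb.le
  have hbpos : 0 < b := by rw [hbdef]; positivity
  have hmem : x ∈ Set.Ioo (-b) b := Set.mem_Ioo.mpr (abs_lt.mp hxb)
  apply hasDerivAt_tsum_of_isPreconnected (u := fun n : ℕ => 2 * ((n:ℝ) * b ^ (n-1)))
    (summable_deriv_bound hb0 hb1) isOpen_Ioo
    (Convex.isPreconnected (convex_Ioo _ _))
    (g := fun n z => bin a n * z ^ n)
    (g' := fun n y => bin a n * ((n:ℝ) * y ^ (n-1)))
    (y₀ := 0) ?_ ?_ ?_ ?_ hmem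
  · intro n y _
    exact (hasDerivAt_pow n y).const_mul (bin a n)
  · intro n y hy
    have hyb : |y| ≤ b := by
      rw [abs_le]; exact ⟨(Set.mem_Ioo.mp hy).1.le, (Set.mem_Ioo.mp hy).2.le⟩
    rw [Real.norm_eq_abs, abs_mul, abs_mul, abs_pow, Nat.abs_cast]
    exact mul_le_mul (abs_bin_le a ha1 ha2 n)
      (mul_le_mul_of_nonneg_left (pow_le_pow_left₀ (abs_nonneg y) hyb _) (Nat.cast_nonneg n))
      (by positivity) (by norm_num)
  · exact Set.mem_Ioo.mpr ⟨by linarith, hbpos⟩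
  · exact summable_bin ha1 ha2 (by simp)

lemma feq {a : ℝ} (ha1 : 1 < a) (ha2 : a < 2) {x : ℝ} (hx : |x| < 1) :
    (1 + x) * Df a x = a * Sf a x := by
  have hS : Summable (fun n : ℕ => bin a n * x ^ n) := summable_bin ha1 ha2 hx
  have hD : Summable (fun n : ℕ => bin a n * ((n:ℝ) * x ^ (n-1))) :=
    summable_bin_deriv ha1 ha2 hx (le_refl _)
  have step1 : Df a x = ∑' n : ℕ, bin a n * (a - n) * x ^ n := by
    rw [Df, Summable.tsum_eq_zero_add hD]
    simp only [Nat.cast_zero, zero_mul, mul_zero, zero_add]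
    apply tsum_congr
    intro n
    have h1 : (n + 1) - 1 = n := rfl
    rw [h1]
    have := bin_succ a n
    push_cast
    linear_combination (x ^ n) * this
  have step2 : ∀ n : ℕ, bin a n * (a - n) * x ^ n
      = a * (bin a n * x ^ n) - x * (bin a n * ((n:ℝ) * x ^ (n-1))) := by
    intro n
    match n with
    | 0 => simp; ring
    | (m+1) =>
      have h1 : (m + 1) - 1 = m := rfl
      rw [h1, pow_succ]
      push_cast
      ring
  have hDe : Df a x = a * Sf a x - x * Df a x := by
    conv_lhs => rw [step1, tsum_congr step2]
    rw [Summable.tsum_sub (hS.mul_left a) (hD.mul_left x), tsum_mul_left, tsum_mul_left]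
    simp only [Sf, Df]
  linear_combination hDe

lemma Sf_zero (a : ℝ) : Sf a 0 = 1 := by
  rw [Sf, tsum_eq_single 0 (fun n hn => by
    match n with
    | 0 => exact absurd rfl hn
    | (m+1) => simp)]
  simp [bin_zero]

theorem binomial_series {a : ℝ} (ha1 : 1 < a) (ha2 : a < 2) {x : ℝ} (hx : |x| < 1) :
    HasSum (fun n : ℕ => bin a n * x ^ n) ((1 + x) ^ a) := by
  have hx1 : 0 < 1 + x := by have := abs_lt.mp hx; linarith [this.1]
  -- F y = Sf a y * (1+y)^(-a) has zero derivative on Ioo (-1) 1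
  set F : ℝ → ℝ := fun y => Sf a y * (1 + y) ^ (-a) with hF
  have hder : ∀ y ∈ Set.Ioo (-1 : ℝ) 1, HasDerivAt F 0 y := by
    intro y hy
    obtain ⟨hy1, hy2⟩ := hy
    have hy0 : 0 < 1 + y := by linarith
    have hyabs : |y| < 1 := abs_lt.mpr ⟨hy1, hy2⟩
    have h1 : HasDerivAt (Sf a) (Df a y) y := hasDerivAt_Sf ha1 ha2 hyabs
    have h2 : HasDerivAt (fun z : ℝ => (1 + z) ^ (-a)) (1 * (-a) * (1 + y) ^ (-a - 1)) y := by
      exact (HasDerivAt.const_add 1 (hasDerivAt_id y)).rpow_const (Or.inl hy0.ne')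
    have h3 := h1.mul h2
    refine HasDerivAt.congr_deriv h3 (Eq.symm ?_)
    have hfe := feq ha1 ha2 hyabs
    have hsplit : (1 + y) ^ (-a) = (1 + y) ^ (-a - 1) * (1 + y) := by
      have h := Real.rpow_add hy0 (-a - 1) 1
      rw [Real.rpow_one, show -a - 1 + 1 = -a by ring] at h
      exact h
    rw [hsplit]
    linear_combination (-(1 + y) ^ (-a - 1)) * hfe
  have hconst : ∀ y ∈ Set.Ioo (-1 : ℝ) 1, F y = F 0 := by
    intro y hy
    obtain ⟨hy1, hy2⟩ := hy
    rcases le_or_gt 0 y with h | h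
    · have : ∀ z ∈ Set.Icc (0:ℝ) y, F z = F 0 := by
        apply constant_of_has_deriv_right_zero
        · intro z hz
          exact (hder z ⟨by linarith [hz.1], by linarith [hz.2]⟩).continuousAt.continuousWithinAt
        · intro z hz
          exact (hder z ⟨by linarith [hz.1], by linarith [hz.2]⟩).hasDerivWithinAt
      exact this y ⟨h, le_refl y⟩
    · have : ∀ z ∈ Set.Icc y (0:ℝ), F z = F y := by
        apply constant_of_has_deriv_right_zero
        · intro z hz
          exact (hder z ⟨by linarith [hz.1], by linarith [hz.2]⟩).continuousAt.continuousWithinAt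
        · intro z hz
          exact (hder z ⟨by linarith [hz.1], by linarith [hz.2]⟩).hasDerivWithinAt
      exact (this 0 ⟨h.le, le_refl 0⟩).symm
  have hFx : F x = 1 := by
    rw [hconst x (abs_lt.mp hx)]
    simp [hF, Sf_zero, Real.rpow_natCast]
  have hSx : Sf a x = (1 + x) ^ a := by
    have hne : (1 + x) ^ (-a) ≠ 0 := (Real.rpow_pos_of_pos hx1 _).ne'
    have : Sf a x = ((1 + x) ^ (-a))⁻¹ := by
      field_simp at hFx ⊢
      simpa [hF] using hFx
    rw [this, ← Real.rpow_neg hx1.le, neg_neg]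
  rw [← hSx]
  exact (summable_bin ha1 ha2 hx).hasSum

lemma even_part {a : ℝ} (ha1 : 1 < a) (ha2 : a < 2) {y : ℝ} (h0 : 0 < y) (h1 : y < 1) :
    HasSum (fun k : ℕ => 2 * bin a (2*k+2) * y ^ (2*k+2))
      ((1+y) ^ a + (1-y) ^ a - 2) := by
  have hy : |y| < 1 := abs_lt.mpr ⟨by linarith, h1⟩
  have hmy : |(-y)| < 1 := by rwa [abs_neg]
  have hp := binomial_series ha1 ha2 hy
  have hm := binomial_series ha1 ha2 hmy
  rw [show 1 + -y = 1 - y by ring] at hm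
  have hs := hp.add hm
  set f : ℕ → ℝ := fun n => bin a n * y ^ n + bin a n * (-y) ^ n with hf
  have hf0 : f 0 = 2 := by norm_num [hf, bin_zero]
  have hf1 : f 1 = 0 := by norm_num [hf]
  have hodd : ∀ n : ℕ, Odd n → f n = 0 := by
    intro n hn
    simp only [hf, hn.neg_pow]
    ring
  have hshift : HasSum (fun n => f (n + 2)) ((1+y) ^ a + (1-y) ^ a - 2) := by
    apply (hasSum_nat_add_iff 2).mpr
    have : ∑ i ∈ Finset.range 2, f i = 2 := by
      rw [Finset.sum_range_succ, Finset.sum_range_one, hf0, hf1]; ring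
    rw [this]
    rw [sub_add_cancel]
    exact hs
  have hinj : Function.Injective (fun k : ℕ => 2 * k) := fun m n h => by
    simp only at h; omega
  have hvan : ∀ n ∉ Set.range (fun k : ℕ => 2 * k), f (n + 2) = 0 := by
    intro n hn
    apply hodd
    rcases Nat.even_or_odd n with he | ho
    · obtain ⟨r, hr⟩ := he
      exact absurd ⟨r, show 2 * r = n by omega⟩ hn
    · obtain ⟨m, hm⟩ := ho
      exact ⟨m + 1, by omega⟩
  have := (Function.Injective.hasSum_iff hinj hvan).mpr hshift
  convert this using 1
  funext k
  simp only [Function.comp, hf]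
  have : (-y) ^ (2*k + 2) = y ^ (2*k+2) := by
    rw [show (-y) = -1 * y by ring, mul_pow]
    have : ((-1:ℝ)) ^ (2*k+2) = 1 := by
      rw [show 2*k+2 = 2*(k+1) by ring, pow_mul]
      norm_num
    rw [this, one_mul]
  rw [this]
  ring

lemma prod_pos_even {H : ℝ} (h1 : 1/2 < H) (h2 : H < 1) :
    ∀ k : ℕ, 0 < ∏ i ∈ Finset.range (2*k+2), (2*H - (i:ℝ)) := by
  intro k
  induction k with
  | zero =>
    rw [show 2*0+2 = 2 by rfl, Finset.prod_range_succ, Finset.prod_range_one]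
    push_cast
    nlinarith
  | succ k ih =>
    have e : 2*(k+1)+2 = (2*k+2)+1+1 := by ring
    rw [e, Finset.prod_range_succ, Finset.prod_range_succ, mul_assoc]
    apply mul_pos ih
    apply mul_pos_of_neg_of_neg
    · push_cast; nlinarith [Nat.cast_nonneg (α := ℝ) k]
    · push_cast; nlinarith [Nat.cast_nonneg (α := ℝ) k]

lemma core_le {y1 y2 : ℝ} (h0 : 0 < y1) (h12 : y1 ≤ y2) (k d : ℕ) :
    (2*y1)^(2*(k+d)+2) * y2^(2*k+2) + (2*y1)^(2*k+2) * y2^(2*(k+d)+2)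
      ≤ (2*y2)^(2*(k+d)+2) * y1^(2*k+2) + (2*y2)^(2*k+2) * y1^(2*(k+d)+2) := by
  have h02 : 0 < y2 := lt_of_lt_of_le h0 h12
  have hyd : y1^(2*d) ≤ y2^(2*d) := pow_le_pow_left₀ h0.le h12 _
  have h4 : (1:ℝ) ≤ 2^(2*d) := one_le_pow₀ one_le_two
  have base : (0:ℝ) ≤ 2^(2*k+2) * (y1*y2)^(2*k+2) := by positivity
  have key : 2^(2*d) * y1^(2*d) + y2^(2*d) ≤ 2^(2*d) * y2^(2*d) + y1^(2*d) := by nlinarith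
  have hm := mul_le_mul_of_nonneg_left key base
  calc (2*y1)^(2*(k+d)+2) * y2^(2*k+2) + (2*y1)^(2*k+2) * y2^(2*(k+d)+2)
      = (2^(2*k+2) * (y1*y2)^(2*k+2)) * (2^(2*d) * y1^(2*d) + y2^(2*d)) := by ring
    _ ≤ (2^(2*k+2) * (y1*y2)^(2*k+2)) * (2^(2*d) * y2^(2*d) + y1^(2*d)) := hm
    _ = (2*y2)^(2*(k+d)+2) * y1^(2*k+2) + (2*y2)^(2*k+2) * y1^(2*(k+d)+2) := by ring

lemma term_le {y1 y2 : ℝ} (h0 : 0 < y1) (h12 : y1 ≤ y2) (j k : ℕ) :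
    (2*y1)^(2*j+2) * y2^(2*k+2) + (2*y1)^(2*k+2) * y2^(2*j+2)
      ≤ (2*y2)^(2*j+2) * y1^(2*k+2) + (2*y2)^(2*k+2) * y1^(2*j+2) := by
  rcases le_total k j with h | h
  · obtain ⟨d, rfl⟩ := Nat.exists_eq_add_of_le h
    exact core_le h0 h12 k d
  · obtain ⟨d, rfl⟩ := Nat.exists_eq_add_of_le h
    have := core_le h0 h12 j d
    linarith

set_option maxHeartbeats 1000000 in
theorem eta_series_and_monotone (H : ℝ) (hH : H ∈ Set.Ioo (1/2 : ℝ) 1)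
    (c : ℕ → ℝ)
    (hc : ∀ k : ℕ, c k = 2 * (∏ i ∈ Finset.range (2*k+2), (2*H - (i:ℝ))) /
            (Nat.factorial (2*k+2)))
    (η : ℝ → ℝ)
    (hη : ∀ y : ℝ, η y =
      ((1+2*y) ^ (2*H) + (1-2*y) ^ (2*H) - 2) / ((1+y) ^ (2*H) + (1-y) ^ (2*H) - 2)) :
    (∀ y ∈ Set.Ioo (0:ℝ) (1/2),
       HasSum (fun k : ℕ => c k * y^(2*k+2)) ((1+y) ^ (2*H) + (1-y) ^ (2*H) - 2) ∧
       HasSum (fun k : ℕ => c k * (2*y)^(2*k+2)) ((1+2*y) ^ (2*H) + (1-2*y) ^ (2*H) - 2)) ∧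
    StrictMonoOn η (Set.Ioo (0:ℝ) (1/2)) := by
  obtain ⟨hH1, hH2⟩ := hH
  have ha1 : 1 < 2*H := by linarith
  have ha2 : 2*H < 2 := by linarith
  have hcb : ∀ k : ℕ, c k = 2 * bin (2*H) (2*k+2) := by
    intro k
    rw [hc k, bin, mul_div_assoc]
  have part1 : ∀ y : ℝ, 0 < y → y < 1 →
      HasSum (fun k : ℕ => c k * y^(2*k+2)) ((1+y) ^ (2*H) + (1-y) ^ (2*H) - 2) := by
    intro y hy0 hy1
    have h2 : (fun k : ℕ => c k * y^(2*k+2))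
        = (fun k : ℕ => 2 * bin (2*H) (2*k+2) * y^(2*k+2)) :=
      funext fun k => by rw [hcb]
    rw [h2]
    exact even_part ha1 ha2 hy0 hy1
  have hcpos : ∀ k : ℕ, 0 < c k := by
    intro k
    rw [hc k]
    apply div_pos
    · have := prod_pos_even hH1 hH2 k
      linarith
    · exact_mod_cast Nat.factorial_pos _
  constructor
  · intro y hy
    obtain ⟨hy0, hy2⟩ := hy
    exact ⟨part1 y hy0 (by linarith), part1 (2*y) (by linarith) (by linarith)⟩
  · intro y1 hy1 y2 hy2 h12
    obtain ⟨h10, h11⟩ := hy1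
    obtain ⟨h20, h21⟩ := hy2
    rw [hη y1, hη y2]
    have hA := part1 y1 h10 (by linarith)
    have hB := part1 (2*y1) (by linarith) (by linarith)
    have hC := part1 y2 h20 (by linarith)
    have hD := part1 (2*y2) (by linarith) (by linarith)
    have posg : ∀ {y L : ℝ}, 0 < y →
        HasSum (fun k : ℕ => c k * y^(2*k+2)) L → 0 < L := by
      intro y L hy hsum
      calc (0:ℝ) < c 0 * y^(2*0+2) := mul_pos (hcpos 0) (pow_pos hy _)
        _ ≤ L := le_hasSum hsum 0 (fun k _ => (mul_pos (hcpos k) (pow_pos hy _)).le)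
    have pA := posg h10 hA
    have pC := posg h20 hC
    rw [div_lt_div_iff₀ pA pC]
    -- goal : g(2y1) * g(y2) < g(2y2) * g(y1)
    have hnn1 : ∀ k : ℕ, 0 ≤ c k * (2*y1)^(2*k+2) :=
      fun k => (mul_pos (hcpos k) (pow_pos (by linarith) _)).le
    have hnn2 : ∀ k : ℕ, 0 ≤ c k * y2^(2*k+2) :=
      fun k => (mul_pos (hcpos k) (pow_pos h20 _)).le
    have hnn3 : ∀ k : ℕ, 0 ≤ c k * (2*y2)^(2*k+2) :=
      fun k => (mul_pos (hcpos k) (pow_pos (by linarith) _)).le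
    have hnn4 : ∀ k : ℕ, 0 ≤ c k * y1^(2*k+2) :=
      fun k => (mul_pos (hcpos k) (pow_pos h10 _)).le
    have sL : Summable (fun p : ℕ × ℕ =>
        (c p.1 * (2*y1)^(2*p.1+2)) * (c p.2 * y2^(2*p.2+2))) :=
      Summable.mul_of_nonneg hB.summable hC.summable hnn1 hnn2
    have sR : Summable (fun p : ℕ × ℕ =>
        (c p.1 * (2*y2)^(2*p.1+2)) * (c p.2 * y1^(2*p.2+2))) :=
      Summable.mul_of_nonneg hD.summable hA.summable hnn3 hnn4
    have L := hB.mul hC sL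
    have R := hD.mul hA sR
    have Lsw := (Equiv.prodComm ℕ ℕ).hasSum_iff.mpr L
    have Rsw := (Equiv.prodComm ℕ ℕ).hasSum_iff.mpr R
    have L2 := L.add Lsw
    have R2 := R.add Rsw
    have hle : ∀ p : ℕ × ℕ,
        (c p.1 * (2*y1)^(2*p.1+2) * (c p.2 * y2^(2*p.2+2))
          + c p.2 * (2*y1)^(2*p.2+2) * (c p.1 * y2^(2*p.1+2)))
        ≤ (c p.1 * (2*y2)^(2*p.1+2) * (c p.2 * y1^(2*p.2+2))
          + c p.2 * (2*y2)^(2*p.2+2) * (c p.1 * y1^(2*p.1+2))) := by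
      rintro ⟨j, k⟩
      have ht := term_le h10 h12.le j k
      have hck : 0 ≤ c j * c k := (mul_pos (hcpos j) (hcpos k)).le
      have := mul_le_mul_of_nonneg_left ht hck
      calc c j * (2*y1)^(2*j+2) * (c k * y2^(2*k+2))
            + c k * (2*y1)^(2*k+2) * (c j * y2^(2*j+2))
          = (c j * c k) * ((2*y1)^(2*j+2) * y2^(2*k+2) + (2*y1)^(2*k+2) * y2^(2*j+2)) := by
            ring
        _ ≤ (c j * c k) * ((2*y2)^(2*j+2) * y1^(2*k+2) + (2*y2)^(2*k+2) * y1^(2*j+2)) := this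
        _ = c j * (2*y2)^(2*j+2) * (c k * y1^(2*k+2))
            + c k * (2*y2)^(2*k+2) * (c j * y1^(2*j+2)) := by ring
    have hstrict :
        (c 1 * (2*y1)^(2*1+2) * (c 0 * y2^(2*0+2))
          + c 0 * (2*y1)^(2*0+2) * (c 1 * y2^(2*1+2)))
        < (c 1 * (2*y2)^(2*1+2) * (c 0 * y1^(2*0+2))
          + c 0 * (2*y2)^(2*0+2) * (c 1 * y1^(2*1+2))) := by
      have hsq : y1^2 < y2^2 := by nlinarith
      have key : 0 < (c 1 * c 0) * (y1^2 * y2^2) * (y2^2 - y1^2) := by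
        apply mul_pos (mul_pos (mul_pos (hcpos 1) (hcpos 0))
          (mul_pos (pow_pos h10 2) (pow_pos h20 2)))
        linarith
      have e1 : (2*1+2) = 4 := by norm_num
      have e2 : (2*0+2) = 2 := by norm_num
      rw [e1, e2]
      nlinarith [key]
    have hlt := hasSum_lt (i := ((1,0) : ℕ × ℕ)) (fun p => hle p) hstrict L2 R2
    linarith
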